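/- arXiv:2102.07541 — 3 statements merged into one kernel-verified Lean document; each statement's English description precedes it below -/
import Mathlib

section
/- Let Z be a random vector on ℝ^k with a Lipschitz continuous, everywhere positive probability density q_Z. Let σ_g : ℝ → ℝ be a bounded continuous function with lim_{r→−∞} σ_g(r) < lim_{r→+∞} σ_g(r). Let σ : ℝ → ℝ be twice differentiable with σ'(t) > 0 for all t and sup_t(|σ(t)| + |σ'(t)| + |σ''(t)|) < ∞, let N_d ≤ n, and let ψ_j(x) = σ(a_jᵀx + b_j) for j = 1,…,N_d, where a_1,…,a_{N_d} ∈ ℝ^n are linearly independent and b_j ∈ ℝ. Then every stationary point θ_s of J (over finite signed Borel measures on ℝ^p) satisfies J(θ_s) = 0. -/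
open MeasureTheory Filter

noncomputable section

/-- Parameter space ℝ^p with p = nk + n: a pair (κ_w, κ_b). -/
abbrev Par (n k : ℕ) : Type := (Fin n → Fin k → ℝ) × (Fin n → ℝ)

/-- Integral of a vector-valued function against a finite signed Borel measure,
via the Jordan decomposition. -/
noncomputable def sInt {α : Type*} [MeasurableSpace α] (θ : MeasureTheory.SignedMeasure α)
    {E : Type*} [NormedAddCommGroup E] [NormedSpace ℝ E] (f : α → E) : E :=
  (∫ x, f x ∂θ.toJordanDecomposition.posPart) -
    ∫ x, f x ∂θ.toJordanDecomposition.negPart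

/-- Generator feature function φ(z; κ) = σ_g(κ_w z + κ_b), σ_g applied entrywise. -/
noncomputable def phi (n k : ℕ) (σg : ℝ → ℝ) (κ : Par n k)
    (z : EuclideanSpace ℝ (Fin k)) : EuclideanSpace ℝ (Fin n) :=
  WithLp.toLp 2 (fun i => σg ((∑ j, κ.1 i j * z j) + κ.2 i))

/-- Infinite-width generator g_θ(z) = ∫ φ(z; κ) dθ(κ). -/
noncomputable def gen (n k : ℕ) (σg : ℝ → ℝ) (θ : MeasureTheory.SignedMeasure (Par n k))
    (z : EuclideanSpace ℝ (Fin k)) : EuclideanSpace ℝ (Fin n) :=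
  sInt θ (fun κ => phi n k σg κ z)

/-- Discriminator features Ψ(x) = (σ(a_jᵀx + b_j))_{j=1}^{N_d}. -/
noncomputable def Psi (n Nd : ℕ) (σ : ℝ → ℝ) (a : Fin Nd → EuclideanSpace ℝ (Fin n))
    (b : Fin Nd → ℝ) (x : EuclideanSpace ℝ (Fin n)) : EuclideanSpace ℝ (Fin Nd) :=
  WithLp.toLp 2 (fun j => σ ((∑ i, a j i * x i) + b j))

/-- Residual r(θ) = E[Ψ(X)] − E[Ψ(g_θ(Z))], where Z has density q_Z. -/
noncomputable def resid (n k Nd : ℕ) (σg σ : ℝ → ℝ)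
    (a : Fin Nd → EuclideanSpace ℝ (Fin n)) (b : Fin Nd → ℝ)
    (PX : Measure (EuclideanSpace ℝ (Fin n)))
    (qZ : EuclideanSpace ℝ (Fin k) → ℝ)
    (θ : MeasureTheory.SignedMeasure (Par n k)) : EuclideanSpace ℝ (Fin Nd) :=
  (∫ x, Psi n Nd σ a b x ∂PX) -
    ∫ z, qZ z • Psi n Nd σ a b (gen n k σg θ z)

/-- Loss J(θ) = (1/2)‖r(θ)‖₂². -/
noncomputable def Jloss (n k Nd : ℕ) (σg σ : ℝ → ℝ)
    (a : Fin Nd → EuclideanSpace ℝ (Fin n)) (b : Fin Nd → ℝ)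
    (PX : Measure (EuclideanSpace ℝ (Fin n)))
    (qZ : EuclideanSpace ℝ (Fin k) → ℝ)
    (θ : MeasureTheory.SignedMeasure (Par n k)) : ℝ :=
  (1 / 2) * ‖resid n k Nd σg σ a b PX qZ θ‖ ^ 2

/-! ### Auxiliary lemmas -/

lemma sInt_eq_of_repr {α : Type*} [MeasurableSpace α] (s : SignedMeasure α)
    (μ ν : Measure α) [IsFiniteMeasure μ] [IsFiniteMeasure ν]
    (h : s = μ.toSignedMeasure - ν.toSignedMeasure)
    {E : Type*} [NormedAddCommGroup E] [NormedSpace ℝ E] [CompleteSpace E] (f : α → E)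
    (hf : ∀ (ρ : Measure α), IsFiniteMeasure ρ → Integrable f ρ) :
    sInt s f = (∫ x, f x ∂μ) - ∫ x, f x ∂ν := by
  set P := s.toJordanDecomposition.posPart with hP
  set N := s.toJordanDecomposition.negPart with hN
  have hrepr : P.toSignedMeasure - N.toSignedMeasure = μ.toSignedMeasure - ν.toSignedMeasure := by
    rw [← h]
    exact s.toSignedMeasure_toJordanDecomposition
  have hmeas : P + ν = μ + N := by
    rw [← Measure.toSignedMeasure_eq_toSignedMeasure_iff,
      Measure.toSignedMeasure_add, Measure.toSignedMeasure_add]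
    have := sub_eq_sub_iff_add_eq_add.mp hrepr
    linear_combination (norm := abel) this
  have h1 : (∫ x, f x ∂P) + ∫ x, f x ∂ν = (∫ x, f x ∂μ) + ∫ x, f x ∂N := by
    rw [← integral_add_measure (hf P inferInstance) (hf ν inferInstance),
      ← integral_add_measure (hf μ inferInstance) (hf N inferInstance), hmeas]
  rw [sInt, ← hP, ← hN]
  have : (∫ x, f x ∂P) - ∫ x, f x ∂N = (∫ x, f x ∂μ) - ∫ x, f x ∂ν := by
    have h2 := congrArg (fun e => e - (∫ x, f x ∂ν) - ∫ x, f x ∂N) h1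
    abel_nf at h2 ⊢
    exact h2
  exact this

lemma sInt_add_smul_dirac {α : Type*} [MeasurableSpace α] [MeasurableSingletonClass α]
    (s : SignedMeasure α) (κ : α) (lam : ℝ)
    {E : Type*} [NormedAddCommGroup E] [NormedSpace ℝ E] [CompleteSpace E] (f : α → E)
    (hf : ∀ (ρ : Measure α), IsFiniteMeasure ρ → Integrable f ρ) :
    sInt (s + lam • (Measure.dirac κ).toSignedMeasure) f = sInt s f + lam • f κ := by
  have hrepr : s + lam • (Measure.dirac κ).toSignedMeasure =
      (s.toJordanDecomposition.posPart + (Real.toNNReal lam) • Measure.dirac κ).toSignedMeasure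
      - (s.toJordanDecomposition.negPart
          + (Real.toNNReal (-lam)) • Measure.dirac κ).toSignedMeasure := by
    rw [Measure.toSignedMeasure_add, Measure.toSignedMeasure_add,
      Measure.toSignedMeasure_smul, Measure.toSignedMeasure_smul]
    have h1 : (Real.toNNReal lam) • (Measure.dirac κ).toSignedMeasure
        - (Real.toNNReal (-lam)) • (Measure.dirac κ).toSignedMeasure
        = lam • (Measure.dirac κ).toSignedMeasure := by
      rw [NNReal.smul_def, NNReal.smul_def]
      ext i hi
      simp only [VectorMeasure.sub_apply, VectorMeasure.smul_apply, smul_eq_mul, ← sub_mul]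
      congr 1
      rcases le_or_gt 0 lam with h | h
      · rw [Real.coe_toNNReal _ h, Real.toNNReal_of_nonpos (by linarith)]; simp
      · rw [Real.toNNReal_of_nonpos (le_of_lt h), Real.coe_toNNReal _ (by linarith)]; simp
    have h2 : s = s.toJordanDecomposition.posPart.toSignedMeasure
        - s.toJordanDecomposition.negPart.toSignedMeasure := by
      conv_lhs => rw [← s.toSignedMeasure_toJordanDecomposition]
      rfl
    rw [← h1]
    nth_rewrite 1 [h2]
    abel
  rw [sInt_eq_of_repr _ _ _ hrepr f hf,
    integral_add_measure (hf _ inferInstance) (hf _ inferInstance),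
    integral_add_measure (hf _ inferInstance) (hf _ inferInstance),
    integral_smul_nnreal_measure, integral_smul_nnreal_measure, integral_dirac,
    NNReal.smul_def, NNReal.smul_def, sInt]
  rcases le_or_gt 0 lam with h | h
  · rw [Real.coe_toNNReal _ h, Real.toNNReal_of_nonpos (by linarith)]
    simp; abel
  · rw [Real.toNNReal_of_nonpos (le_of_lt h), Real.coe_toNNReal _ (by linarith)]
    simp; abel

lemma eucl_norm_le {n : ℕ} (x : EuclideanSpace ℝ (Fin n)) {M : ℝ} (hM : 0 ≤ M)
    (h : ∀ i, |x i| ≤ M) : ‖x‖ ≤ Real.sqrt n * M := by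
  rw [EuclideanSpace.norm_eq]
  have hs : (∑ i, ‖x i‖ ^ 2) ≤ ∑ _i : Fin n, M ^ 2 :=
    Finset.sum_le_sum fun i _ => by
      have := h i
      rw [Real.norm_eq_abs]
      nlinarith [abs_nonneg (x i)]
  calc Real.sqrt (∑ i, ‖x i‖ ^ 2) ≤ Real.sqrt ((n : ℝ) * M ^ 2) :=
        Real.sqrt_le_sqrt (by simpa using hs)
    _ = Real.sqrt n * M := by
        rw [Real.sqrt_mul (by positivity), Real.sqrt_sq hM]

theorem wgan_infinite_small_discriminator_no_spurious_stationary_points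
    (n k Nd : ℕ) (hNd : Nd ≤ n)
    -- (AL): latent density
    (qZ : EuclideanSpace ℝ (Fin k) → ℝ)
    (hq_lip : ∃ L : NNReal, LipschitzWith L qZ)
    (hq_pos : ∀ z, 0 < qZ z)
    (hq_prob : ∫ z, qZ z = 1)
    -- (AG): generator activation
    (σg : ℝ → ℝ) (hσg_cont : Continuous σg)
    (hσg_bdd : ∃ M, ∀ r, |σg r| ≤ M)
    (hσg_lim : ∃ l u : ℝ, Tendsto σg atBot (nhds l) ∧ Tendsto σg atTop (nhds u) ∧ l < u)
    -- (AD): discriminator activation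
    (σ : ℝ → ℝ) (hσ_diff : Differentiable ℝ σ) (hσ'_diff : Differentiable ℝ (deriv σ))
    (hσ'_pos : ∀ t, 0 < deriv σ t)
    (hσ_bdd : ∃ M, ∀ t, |σ t| + |deriv σ t| + |deriv (deriv σ) t| ≤ M)
    -- discriminator weights: linearly independent
    (a : Fin Nd → EuclideanSpace ℝ (Fin n)) (b : Fin Nd → ℝ)
    (ha : LinearIndependent ℝ a)
    -- true data distribution
    (PX : Measure (EuclideanSpace ℝ (Fin n))) (hPX : IsProbabilityMeasure PX)
    -- θ_s is a stationary point of J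
    (θs : MeasureTheory.SignedMeasure (Par n k))
    (hstat : ∀ μ : MeasureTheory.SignedMeasure (Par n k),
      HasDerivAt (fun lam : ℝ => Jloss n k Nd σg σ a b PX qZ (θs + lam • μ)) 0 0) :
    Jloss n k Nd σg σ a b PX qZ θs = 0 := by
  classical
  obtain ⟨M, hM⟩ := hσg_bdd
  have hM0 : 0 ≤ M := le_trans (abs_nonneg _) (hM 0)
  obtain ⟨M₂, hM₂⟩ := hσ_bdd
  have hσb : ∀ t, |σ t| ≤ M₂ := by
    intro t
    have h1 := hM₂ t
    have h2 := abs_nonneg (deriv σ t)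
    have h3 := abs_nonneg (deriv (deriv σ) t)
    linarith
  have hσ'b : ∀ t, |deriv σ t| ≤ M₂ := by
    intro t
    have h1 := hM₂ t
    have h2 := abs_nonneg (σ t)
    have h3 := abs_nonneg (deriv (deriv σ) t)
    linarith
  have hM₂0 : 0 ≤ M₂ := le_trans (abs_nonneg _) (hσb 0)
  obtain ⟨L, hL⟩ := hq_lip
  have hqZ_cont : Continuous qZ := hL.continuous
  have hqZ_nonneg : ∀ z, 0 ≤ qZ z := fun z => (hq_pos z).le
  -- qZ is integrable
  have hqZ_int : Integrable qZ (volume : Measure (EuclideanSpace ℝ (Fin k))) := by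
    by_contra h
    rw [integral_undef h] at hq_prob
    norm_num at hq_prob
  -- the ambient volume measure is nonzero
  have hvol : (volume : Measure (EuclideanSpace ℝ (Fin k))) ≠ 0 := by
    intro h0
    rw [h0, integral_zero_measure] at hq_prob
    norm_num at hq_prob
  -- φ facts
  set Cφ : ℝ := Real.sqrt n * M with hCφ
  have hφ_bd : ∀ (κ : Par n k) z, ‖phi n k σg κ z‖ ≤ Cφ := fun κ z =>
    eucl_norm_le _ hM0 fun i => hM ((∑ j, κ.1 i j * z j) + κ.2 i)
  have hφ_contκ : ∀ z, Continuous fun κ : Par n k => phi n k σg κ z := by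
    intro z
    apply (PiLp.continuous_toLp 2 (fun _ : Fin n => ℝ)).comp
    apply continuous_pi
    intro i
    exact hσg_cont.comp (by fun_prop)
  have hφ_contz : ∀ κ : Par n k, Continuous fun z => phi n k σg κ z := by
    intro κ
    apply (PiLp.continuous_toLp 2 (fun _ : Fin n => ℝ)).comp
    apply continuous_pi
    intro i
    apply hσg_cont.comp
    apply Continuous.add _ continuous_const
    apply continuous_finset_sum
    intro j _
    exact continuous_const.mul ((continuous_apply j).comp (PiLp.continuous_ofLp 2 _))
  have hφ_int : ∀ z (ρ : Measure (Par n k)), IsFiniteMeasure ρ →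
      Integrable (fun κ => phi n k σg κ z) ρ := by
    intro z ρ hρ
    exact (integrable_const Cφ).mono' ((hφ_contκ z).aestronglyMeasurable)
      (Eventually.of_forall fun κ => hφ_bd κ z)
  -- the generator at θs and its continuity
  set g : EuclideanSpace ℝ (Fin k) → EuclideanSpace ℝ (Fin n) := gen n k σg θs with hgdef
  have hg_cont : Continuous g := by
    have haux : ∀ (ρ : Measure (Par n k)), IsFiniteMeasure ρ →
        Continuous fun z => ∫ κ, phi n k σg κ z ∂ρ := by
      intro ρ hρ
      rw [continuous_iff_continuousAt]
      intro z0
      apply continuousAt_of_dominated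
        (bound := fun _ => Cφ)
      · exact Eventually.of_forall fun z => (hφ_contκ z).aestronglyMeasurable
      · exact Eventually.of_forall fun z => ae_of_all _ fun κ => hφ_bd κ z
      · exact integrable_const Cφ
      · exact ae_of_all _ fun κ => (hφ_contz κ).continuousAt
    exact (haux _ inferInstance).sub (haux _ inferInstance)
  -- continuity and boundedness of Psi
  set Cψ : ℝ := Real.sqrt Nd * M₂ with hCψ
  have hΨ_bd : ∀ x, ‖Psi n Nd σ a b x‖ ≤ Cψ := fun x =>
    eucl_norm_le _ hM₂0 fun j => hσb ((∑ i, a j i * x i) + b j)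
  have hΨ_cont : Continuous (Psi n Nd σ a b) := by
    apply (PiLp.continuous_toLp 2 (fun _ : Fin Nd => ℝ)).comp
    apply continuous_pi
    intro j
    apply hσ_diff.continuous.comp
    apply Continuous.add _ continuous_const
    apply continuous_finset_sum
    intro i _
    exact continuous_const.mul ((continuous_apply i).comp (PiLp.continuous_ofLp 2 _))
  -- the key per-direction stationarity identity
  set r0 : EuclideanSpace ℝ (Fin Nd) := resid n k Nd σg σ a b PX qZ θs with hr0def
  set ccoef : Fin Nd → ℝ :=
    fun j => ∫ z, qZ z * deriv σ ((∑ i, a j i * g z i) + b j) with hcdef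
  -- integrability of the coefficient integrand
  have hc_cont : ∀ j, Continuous fun z => qZ z * deriv σ ((∑ i, a j i * g z i) + b j) := by
    intro j
    apply hqZ_cont.mul
    apply (hσ'_diff.continuous).comp
    apply Continuous.add _ continuous_const
    apply continuous_finset_sum
    intro i _
    exact continuous_const.mul ((continuous_apply i).comp ((PiLp.continuous_ofLp 2 _).comp hg_cont))
  have hc_int : ∀ j, Integrable (fun z => qZ z * deriv σ ((∑ i, a j i * g z i) + b j)) := by
    intro j
    apply (hqZ_int.const_mul M₂).mono' (hc_cont j).aestronglyMeasurable
    apply Eventually.of_forall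
    intro z
    rw [Real.norm_eq_abs, abs_mul, abs_of_nonneg (hqZ_nonneg z)]
    calc qZ z * |deriv σ _| ≤ qZ z * M₂ := by
          exact mul_le_mul_of_nonneg_left (hσ'b _) (hqZ_nonneg z)
      _ = M₂ * qZ z := by ring
  have hc_pos : ∀ j, 0 < ccoef j := by
    intro j
    rw [hcdef]
    have hnn : (0 : EuclideanSpace ℝ (Fin k) → ℝ) ≤
        fun z => qZ z * deriv σ ((∑ i, a j i * g z i) + b j) :=
      fun z => le_of_lt (mul_pos (hq_pos z) (hσ'_pos _))
    refine (integral_pos_iff_support_of_nonneg hnn (hc_int j)).mpr ?_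
    have hsupp : Function.support
        (fun z => qZ z * deriv σ ((∑ i, a j i * g z i) + b j)) = Set.univ := by
      apply Set.eq_univ_of_forall
      intro z
      exact ne_of_gt (mul_pos (hq_pos z) (hσ'_pos _))
    rw [hsupp]
    exact Measure.measure_univ_pos.mpr hvol
  -- the key identity for every bias vector β
  have key : ∀ β : Fin n → ℝ,
      ∑ j, (r0 j * (∑ i, a j i * σg (β i))) * ccoef j = 0 := by
    intro β
    set κ0 : Par n k := (fun _ _ => 0, β) with hκ0
    set v : EuclideanSpace ℝ (Fin n) := WithLp.toLp 2 (fun i => σg (β i)) with hv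
    have hphi0 : ∀ z, phi n k σg κ0 z = v := by
      intro z
      ext i
      simp [phi, hκ0, hv]
    have hgen : ∀ (lam : ℝ) z,
        gen n k σg (θs + lam • (Measure.dirac κ0).toSignedMeasure) z = g z + lam • v := by
      intro lam z
      rw [gen, sInt_add_smul_dirac _ _ _ _ (hφ_int z), hphi0 z]
      rfl
    set α : Fin Nd → ℝ := fun j => ∑ i, a j i * v i with hα
    set F : ℝ → EuclideanSpace ℝ (Fin k) → EuclideanSpace ℝ (Fin Nd) :=
      fun lam z => qZ z • Psi n Nd σ a b (g z + lam • v) with hF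
    set F' : ℝ → EuclideanSpace ℝ (Fin k) → EuclideanSpace ℝ (Fin Nd) :=
      fun lam z => WithLp.toLp 2 (fun j =>
        qZ z * (deriv σ ((∑ i, a j i * (g z + lam • v) i) + b j) * α j)) with hF'
    have harg : ∀ (l : ℝ) z (j : Fin Nd),
        (∑ i, a j i * (g z + l • v) i) + b j
          = ((∑ i, a j i * g z i) + b j) + l * α j := by
      intro l z j
      have h1 : ∀ i, a j i * (g z + l • v) i = a j i * g z i + (a j i * v i) * l := by
        intro i
        simp only [PiLp.add_apply, PiLp.smul_apply, smul_eq_mul]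
        ring
      rw [Finset.sum_congr rfl fun i _ => h1 i, Finset.sum_add_distrib, ← Finset.sum_mul]
      simp only [hα]
      ring
    have hFderiv : ∀ z (lam : ℝ), HasDerivAt (fun l => F l z) (F' lam z) lam := by
      intro z lam
      have hpi : HasDerivAt
          (fun l => (EuclideanSpace.equiv (Fin Nd) ℝ) (F l z))
          ((EuclideanSpace.equiv (Fin Nd) ℝ) (F' lam z)) lam := by
        apply hasDerivAt_pi.mpr
        intro j
        show HasDerivAt
          (fun l => qZ z * σ ((∑ i, a j i * (g z + l • v) i) + b j))
          (qZ z * (deriv σ ((∑ i, a j i * (g z + lam • v) i) + b j) * α j)) lam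
        simp only [harg]
        have h1 : HasDerivAt (fun l : ℝ => ((∑ i, a j i * g z i) + b j) + l * α j) (α j) lam := by
          simpa using ((hasDerivAt_id lam).mul_const (α j)).const_add ((∑ i, a j i * g z i) + b j)
        have h2 := (hσ_diff _).hasDerivAt.comp lam h1
        exact h2.const_mul (qZ z)
      have h4 := (((EuclideanSpace.equiv (Fin Nd) ℝ).symm :
          (Fin Nd → ℝ) →L[ℝ] EuclideanSpace ℝ (Fin Nd)).hasFDerivAt).comp_hasDerivAt lam hpi
      exact h4
    set Aα : ℝ := ∑ j, |α j| with hAα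
    have hAα0 : 0 ≤ Aα := Finset.sum_nonneg fun j _ => abs_nonneg _
    have hαle : ∀ j, |α j| ≤ Aα :=
      fun j => Finset.single_le_sum (fun j _ => abs_nonneg (α j)) (Finset.mem_univ j)
    set c : ℝ := Real.sqrt Nd * (M₂ * Aα) with hc
    have hF'_bd : ∀ (lam : ℝ) z, ‖F' lam z‖ ≤ c * qZ z := by
      intro lam z
      have hcomp : ∀ j, |(F' lam z) j| ≤ qZ z * (M₂ * Aα) := by
        intro j
        show |qZ z * (deriv σ _ * α j)| ≤ qZ z * (M₂ * Aα)
        rw [abs_mul, abs_mul, abs_of_nonneg (hqZ_nonneg z)]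
        apply mul_le_mul_of_nonneg_left _ (hqZ_nonneg z)
        exact mul_le_mul (hσ'b _) (hαle j) (abs_nonneg _) hM₂0
      calc ‖F' lam z‖ ≤ Real.sqrt Nd * (qZ z * (M₂ * Aα)) :=
            eucl_norm_le _ (mul_nonneg (hqZ_nonneg z) (mul_nonneg hM₂0 hAα0)) hcomp
        _ = c * qZ z := by rw [hc]; ring
    have hF_cont : ∀ lam : ℝ, Continuous (F lam) := by
      intro lam
      exact hqZ_cont.smul (hΨ_cont.comp (hg_cont.add continuous_const))
    have hF'_cont : Continuous (F' 0) := by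
      apply (PiLp.continuous_toLp 2 (fun _ : Fin Nd => ℝ)).comp
      apply continuous_pi
      intro j
      apply hqZ_cont.mul
      apply Continuous.mul _ continuous_const
      apply (hσ'_diff.continuous).comp
      apply Continuous.add _ continuous_const
      apply continuous_finset_sum
      intro i _
      exact continuous_const.mul
        ((continuous_apply i).comp ((PiLp.continuous_ofLp 2 _).comp
          (hg_cont.add continuous_const)))
    have hF0_int : Integrable (F 0) := by
      apply (hqZ_int.const_mul Cψ).mono' (hF_cont 0).aestronglyMeasurable
      apply Eventually.of_forall
      intro z
      rw [hF]
      simp only [norm_smul, Real.norm_eq_abs, abs_of_nonneg (hqZ_nonneg z)]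
      calc qZ z * ‖Psi n Nd σ a b (g z + (0:ℝ) • v)‖ ≤ qZ z * Cψ :=
            mul_le_mul_of_nonneg_left (hΨ_bd _) (hqZ_nonneg z)
        _ = Cψ * qZ z := by ring
    have hder := hasDerivAt_integral_of_dominated_loc_of_deriv_le
      (F := F) (F' := F') (x₀ := (0:ℝ)) (bound := fun z => c * qZ z)
      (Filter.univ_mem)
      (Eventually.of_forall fun lam => (hF_cont lam).aestronglyMeasurable)
      hF0_int
      hF'_cont.aestronglyMeasurable
      (ae_of_all _ fun z lam _ => hF'_bd lam z)
      (hqZ_int.const_mul c)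
      (ae_of_all _ fun z lam _ => hFderiv z lam)
    obtain ⟨hF'int, hu⟩ := hder
    set w : EuclideanSpace ℝ (Fin Nd) := ∫ z, F' 0 z with hw
    set u : ℝ → EuclideanSpace ℝ (Fin Nd) := fun lam => ∫ z, F lam z with hudef
    set C0 : EuclideanSpace ℝ (Fin Nd) := ∫ x, Psi n Nd σ a b x ∂PX with hC0
    -- rewrite the loss along this direction
    have hJeq : (fun lam : ℝ =>
        Jloss n k Nd σg σ a b PX qZ (θs + lam • (Measure.dirac κ0).toSignedMeasure))
        = fun lam => (1/2 : ℝ) * ‖C0 - u lam‖ ^ 2 := by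
      funext lam
      rw [Jloss]
      have h5 : resid n k Nd σg σ a b PX qZ
          (θs + lam • (Measure.dirac κ0).toSignedMeasure) = C0 - u lam := by
        rw [resid]
        congr 1
        apply integral_congr_ae
        apply ae_of_all
        intro z
        show qZ z • Psi n Nd σ a b
            (gen n k σg (θs + lam • (Measure.dirac κ0).toSignedMeasure) z) = F lam z
        rw [hgen lam z]
      rw [h5]
    have hstat' : HasDerivAt (fun lam : ℝ => (1/2 : ℝ) * ‖C0 - u lam‖ ^ 2) 0 0 := by
      rw [← hJeq]
      exact hstat _
    have hq' : HasDerivAt (fun lam => C0 - u lam) (-w) 0 := by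
      have h6 := (hasDerivAt_const (0:ℝ) C0).sub hu
      rw [zero_sub] at h6
      exact h6
    have hinner : HasDerivAt (fun lam => (inner ℝ (C0 - u lam) (C0 - u lam) : ℝ))
        ((inner ℝ (C0 - u 0) (-w) : ℝ) + (inner ℝ (-w) (C0 - u 0) : ℝ)) 0 :=
      hq'.inner ℝ hq'
    have hJ2 : HasDerivAt (fun lam : ℝ => (1/2 : ℝ) * ‖C0 - u lam‖ ^ 2)
        ((1/2 : ℝ) * ((inner ℝ (C0 - u 0) (-w) : ℝ) + (inner ℝ (-w) (C0 - u 0) : ℝ))) 0 := by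
      have h3 := hinner.const_mul (1/2 : ℝ)
      simpa only [real_inner_self_eq_norm_sq] using h3
    have huniq := hJ2.unique hstat'
    -- identify C0 - u 0 with r0
    have hr0 : C0 - u 0 = r0 := by
      rw [hr0def, resid]
      congr 1
      apply integral_congr_ae
      apply ae_of_all
      intro z
      show qZ z • Psi n Nd σ a b (g z + (0:ℝ) • v) = qZ z • Psi n Nd σ a b (g z)
      rw [zero_smul, add_zero]
    have hrw : (inner ℝ r0 w : ℝ) = 0 := by
      rw [hr0] at huniq
      have : (inner ℝ r0 (-w) : ℝ) + (inner ℝ (-w) r0 : ℝ) = -2 * (inner ℝ r0 w : ℝ) := by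
        rw [inner_neg_right, inner_neg_left, real_inner_comm]
        ring
      rw [this] at huniq
      linarith
    -- expand the inner product as the desired sum
    have hF'0 : ∀ z, F' 0 z = fun j =>
        qZ z * (deriv σ ((∑ i, a j i * g z i) + b j) * α j) := by
      intro z
      funext j
      show qZ z * (deriv σ ((∑ i, a j i * (g z + (0:ℝ) • v) i) + b j) * α j)
        = qZ z * (deriv σ ((∑ i, a j i * g z i) + b j) * α j)
      rw [harg 0 z j, zero_mul, add_zero]
    have hexp : (inner ℝ r0 w : ℝ)
        = ∑ j, (r0 j * α j) * ccoef j := by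
      rw [hw, ← integral_inner hF'int r0]
      have hptw : ∀ z, (inner ℝ r0 (F' 0 z) : ℝ)
          = ∑ j, (r0 j * α j) * (qZ z * deriv σ ((∑ i, a j i * g z i) + b j)) := by
        intro z
        rw [PiLp.inner_apply]
        rw [hF'0 z]
        apply Finset.sum_congr rfl
        intro j _
        simp only [RCLike.inner_apply, starRingEnd_apply, star_trivial]
        ring
      rw [integral_congr_ae (ae_of_all _ hptw)]
      rw [integral_finset_sum]
      · apply Finset.sum_congr rfl
        intro j _
        rw [integral_const_mul, hcdef]
      · intro j _
        exact (hc_int j).const_mul _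
    calc ∑ j, (r0 j * (∑ i, a j i * σg (β i))) * ccoef j
        = ∑ j, (r0 j * α j) * ccoef j := by
          apply Finset.sum_congr rfl
          intro j _
          rw [hα]
      _ = (inner ℝ r0 w : ℝ) := hexp.symm
      _ = 0 := hrw
  -- extract two distinct values of σg
  obtain ⟨l, uu, hlb, hub, hlu⟩ := hσg_lim
  obtain ⟨r1, hr1⟩ := (hlb.eventually_lt_const (show l < (l + uu) / 2 by linarith)).exists
  obtain ⟨r2, hr2⟩ := (hub.eventually_const_lt (show (l + uu) / 2 < uu by linarith)).exists
  have hr12 : σg r1 < σg r2 := lt_trans hr1 hr2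
  -- deduce the coordinatewise equations
  have hsum : ∀ i0 : Fin n, ∑ j, (r0 j * ccoef j) * a j i0 = 0 := by
    intro i0
    have h1 := key (fun _ => r1)
    have h2 := key (fun i => if i = i0 then r2 else r1)
    have h3 : ∑ j, (((r0 j * ccoef j) * a j i0) * (σg r2 - σg r1)) = 0 := by
      have e : ∀ j : Fin Nd, ((r0 j * ccoef j) * a j i0) * (σg r2 - σg r1)
          = (r0 j * (∑ i, a j i * σg (if i = i0 then r2 else r1))) * ccoef j
            - (r0 j * (∑ i, a j i * σg r1)) * ccoef j := by
        intro j
        have hX : (∑ i, a j i * σg (if i = i0 then r2 else r1))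
            = (∑ i, a j i * σg r1) + a j i0 * (σg r2 - σg r1) := by
          have h4 : ∀ i : Fin n, a j i * σg (if i = i0 then r2 else r1)
              = a j i * σg r1 + (if i = i0 then a j i * (σg r2 - σg r1) else 0) := by
            intro i
            by_cases h : i = i0 <;> simp [h] <;> ring
          rw [Finset.sum_congr rfl fun i _ => h4 i, Finset.sum_add_distrib,
            Finset.sum_ite_eq' Finset.univ i0 (fun i => a j i * (σg r2 - σg r1))]
          simp
        rw [hX]
        ring
      rw [Finset.sum_congr rfl fun j _ => e j, Finset.sum_sub_distrib, h2, h1, sub_zero]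
    rw [← Finset.sum_mul] at h3
    have hd : σg r2 - σg r1 ≠ 0 := sub_ne_zero.mpr (ne_of_gt hr12)
    exact (mul_eq_zero.mp h3).resolve_right hd
  -- assemble into a vanishing linear combination
  have hlin : ∑ j, (r0 j * ccoef j) • a j = 0 := by
    ext i0
    have h5 : (∑ j, (r0 j * ccoef j) • a j) i0 = ∑ j, (r0 j * ccoef j) * a j i0 := by
      rw [WithLp.ofLp_sum, Finset.sum_apply]
      apply Finset.sum_congr rfl
      intro j _
      rfl
    show (∑ j, (r0 j * ccoef j) • a j) i0 = 0
    rw [h5, hsum i0]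
  have hcoef : ∀ j, r0 j * ccoef j = 0 :=
    Fintype.linearIndependent_iff.mp ha _ hlin
  have hr0j : ∀ j, r0 j = 0 := by
    intro j
    rcases mul_eq_zero.mp (hcoef j) with h | h
    · exact h
    · exact absurd h (ne_of_gt (hc_pos j))
  have hr00 : r0 = 0 := by
    ext j
    exact hr0j j
  rw [Jloss, ← hr0def, hr00]
  simp

end
end

section
/- Let N_d ≤ n, let σ : ℝ → ℝ be differentiable with σ'(t) > 0 for all t, and let ψ_j(x) = σ(a_jᵀx + b_j) for j = 1,…,N_d. Suppose the pairs (a_j, b_j) ∈ ℝ^n × ℝ are sampled IID from a probability distribution absolutely continuous with respect to Lebesgue measure on ℝ^{n+1}. Then with probability 1 the Jacobian kernel point condition holds: for every x ∈ ℝ^n, ker(DΨ(x)ᵀ) = {0}, where DΨ(x)ᵀ is the n × N_d matrix whose columns are ∇ψ_j(x) = σ'(a_jᵀx + b_j) a_j. -/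
open MeasureTheory

noncomputable section

/-- The set of linearly dependent tuples is measurable (it is the zero set of the
Gram determinant). -/
lemma measurableSet_dep (n m : ℕ) :
    MeasurableSet {a : Fin m → EuclideanSpace ℝ (Fin n) | ¬ LinearIndependent ℝ a} := by
  classical
  have key : ∀ (a : Fin m → EuclideanSpace ℝ (Fin n)) (v : Fin m → ℝ) (k : Fin m),
      (Matrix.of fun i j => (inner ℝ (a i) (a j) : ℝ)).mulVec v k
        = inner ℝ (a k) (∑ j, v j • a j) := by
    intro a v k
    simp only [Matrix.mulVec, dotProduct, Matrix.of_apply, inner_sum,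
      real_inner_smul_right]
    exact Finset.sum_congr rfl fun j _ => mul_comm _ _
  have hset : {a : Fin m → EuclideanSpace ℝ (Fin n) | ¬ LinearIndependent ℝ a}
      = (fun a : Fin m → EuclideanSpace ℝ (Fin n) =>
          (Matrix.of fun i j => (inner ℝ (a i) (a j) : ℝ)).det) ⁻¹' {0} := by
    ext a
    simp only [Set.mem_setOf_eq, Set.mem_preimage, Set.mem_singleton_iff]
    constructor
    · intro h
      rw [Fintype.not_linearIndependent_iff] at h
      obtain ⟨g, hg, i, hi⟩ := h
      rw [← Matrix.exists_mulVec_eq_zero_iff]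
      refine ⟨g, fun h0 => hi (congrFun h0 i), funext fun k => ?_⟩
      rw [key a g k, hg, inner_zero_right]
      rfl
    · intro h hLI
      rw [← Matrix.exists_mulVec_eq_zero_iff] at h
      obtain ⟨v, hv, hv0⟩ := h
      have hw : (∑ j, v j • a j) = 0 := by
        have h2 : (inner ℝ (∑ k, v k • a k) (∑ j, v j • a j) : ℝ) = 0 := by
          rw [sum_inner]
          refine Finset.sum_eq_zero fun k _ => ?_
          rw [real_inner_smul_left, ← key a v k, hv0]
          simp
        exact inner_self_eq_zero.mp h2
      have := Fintype.linearIndependent_iff.mp hLI v hw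
      exact hv (funext fun i => this i)
  rw [hset]
  have hcont : Continuous (fun a : Fin m → EuclideanSpace ℝ (Fin n) =>
      (Matrix.of fun i j => (inner ℝ (a i) (a j) : ℝ)).det) := by
    apply Continuous.matrix_det
    apply continuous_matrix
    intro i j
    have : Continuous fun a : Fin m → EuclideanSpace ℝ (Fin n) => (inner ℝ (a i) (a j) : ℝ) :=
      Continuous.inner (continuous_apply i) (continuous_apply j)
    exact this
  exact hcont.measurable (measurableSet_singleton 0)

/-- Key induction lemma: if `g` pushes `ν` to a measure giving zero mass to every proper
subspace of `ℝⁿ`, then `m ≤ n` i.i.d. samples are a.s. linearly independent (after `g`). -/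
lemma pi_dep_null {α : Type*} [MeasurableSpace α] {n : ℕ}
    (g : α → EuclideanSpace ℝ (Fin n)) (hg : Measurable g)
    (ν : Measure α) [IsProbabilityMeasure ν]
    (hnull : ∀ S : Submodule ℝ (EuclideanSpace ℝ (Fin n)), S ≠ ⊤ → ν (g ⁻¹' (S : Set _)) = 0) :
    ∀ m, m ≤ n →
      Measure.pi (fun _ : Fin m => ν)
        {ab : Fin m → α | ¬ LinearIndependent ℝ fun j => g (ab j)} = 0 := by
  have hSmeas : ∀ m, MeasurableSet {ab : Fin m → α | ¬ LinearIndependent ℝ fun j => g (ab j)} := by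
    intro m
    have hF : Measurable (fun ab : Fin m → α => fun j => g (ab j)) :=
      measurable_pi_lambda _ fun j => hg.comp (measurable_pi_apply j)
    exact hF (measurableSet_dep n m)
  intro m
  induction m with
  | zero =>
    intro _
    have : {ab : Fin 0 → α | ¬ LinearIndependent ℝ fun j => g (ab j)} = ∅ := by
      ext ab
      simp [linearIndependent_empty_type]
    rw [this, measure_empty]
  | succ m ih =>
    intro hmn
    have hm : m < n := Nat.lt_of_lt_of_le (Nat.lt_succ_self m) hmn
    set S := {ab : Fin (m+1) → α | ¬ LinearIndependent ℝ fun j => g (ab j)} with hS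
    set T := MeasurableEquiv.piFinSuccAbove (fun _ : Fin (m+1) => α) (Fin.last m) with hT
    have hMP := measurePreserving_piFinSuccAbove (fun _ : Fin (m+1) => ν) (Fin.last m)
    have hkey : Measure.pi (fun _ : Fin (m+1) => ν) S
        = (ν.prod (Measure.pi fun _ : Fin m => ν)) (T.symm ⁻¹' S) :=
      ((MeasurePreserving.symm T hMP).measure_preimage (hSmeas (m+1)).nullMeasurableSet).symm
    rw [hkey]
    have hS'meas : MeasurableSet (T.symm ⁻¹' S) :=
      T.symm.measurable (hSmeas (m+1))
    rw [Measure.prod_apply_symm hS'meas]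
    have hspan : ∀ y : Fin m → α,
        Submodule.span ℝ (Set.range fun j => g (y j)) ≠ ⊤ := by
      intro y htop
      have h1 : Module.finrank ℝ
          (Submodule.span ℝ (Set.range fun j => g (y j))) ≤ m := by
        simpa [Set.finrank] using finrank_range_le_card (R := ℝ) (fun j => g (y j))
      rw [htop, finrank_top, finrank_euclideanSpace_fin] at h1
      omega
    have hae : ∀ᵐ y ∂(Measure.pi fun _ : Fin m => ν),
        ν ((fun x => (x, y)) ⁻¹' (T.symm ⁻¹' S)) = 0 := by
      have hLIae : ∀ᵐ y ∂(Measure.pi fun _ : Fin m => ν),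
          LinearIndependent ℝ fun j => g (y j) := by
        rw [ae_iff]
        exact ih (le_of_lt hm)
      filter_upwards [hLIae] with y hy
      refine measure_mono_null ?_ (hnull _ (hspan y))
      intro x hx
      simp only [Set.mem_preimage, hS, Set.mem_setOf_eq] at hx
      have hins : T.symm (x, y) = Fin.snoc y x := by
        have h0 : T.symm (x, y) = (Fin.last m).insertNth x y := rfl
        rw [h0, Fin.insertNth_last']
      rw [hins] at hx
      have hcomp : (fun j => g ((Fin.snoc y x : Fin (m+1) → α) j))
          = Fin.snoc (fun j => g (y j)) (g x) := by
        funext j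
        exact congrFun (Fin.comp_snoc g y x) j
      rw [hcomp, linearIndependent_fin_snoc] at hx
      push_neg at hx
      exact hx hy
    calc ∫⁻ y, ν ((fun x => (x, y)) ⁻¹' (T.symm ⁻¹' S)) ∂(Measure.pi fun _ : Fin m => ν)
        = ∫⁻ _, 0 ∂(Measure.pi fun _ : Fin m => ν) := lintegral_congr_ae hae
      _ = 0 := lintegral_zero

/-- with (a_j, b_j) IID from a distribution absolutely continuous w.r.t.
Lebesgue measure and σ' > 0, the Jacobian kernel point condition
ker(DΨ(x)ᵀ) = {0} for all x holds with probability 1. -/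
theorem jacobian_kernel_point_condition_as
    (n Nd : ℕ) (hNd : Nd ≤ n)
    (σ : ℝ → ℝ) (hσ_diff : Differentiable ℝ σ) (hσ'_pos : ∀ t, 0 < deriv σ t)
    (ν : Measure (EuclideanSpace ℝ (Fin n) × ℝ)) (hν : IsProbabilityMeasure ν)
    (hνac : ν ≪ volume) :
    (Measure.pi fun _ : Fin Nd => ν)
      {ab : Fin Nd → EuclideanSpace ℝ (Fin n) × ℝ |
        ∀ x : EuclideanSpace ℝ (Fin n), ∀ η : EuclideanSpace ℝ (Fin Nd),
          (∑ j, (η j * deriv σ ((∑ i, (ab j).1 i * x i) + (ab j).2)) • (ab j).1) = 0 →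
          η = 0} = 1 := by
  classical
  set μ := Measure.pi fun _ : Fin Nd => ν with hμ
  haveI : IsProbabilityMeasure μ := by rw [hμ]; infer_instance
  set Bad := {ab : Fin Nd → EuclideanSpace ℝ (Fin n) × ℝ |
      ¬ LinearIndependent ℝ fun j => (ab j).1} with hBadDef
  have hBadMeas : MeasurableSet Bad := by
    have hF : Measurable (fun ab : Fin Nd → EuclideanSpace ℝ (Fin n) × ℝ =>
        fun j => (ab j).1) :=
      measurable_pi_lambda _ fun j => measurable_fst.comp (measurable_pi_apply j)
    exact hF (measurableSet_dep n Nd)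
  have hBad0 : μ Bad = 0 := by
    refine pi_dep_null Prod.fst measurable_fst ν ?_ Nd hNd
    intro S hS
    apply hνac
    have hpre : (Prod.fst ⁻¹' (S : Set (EuclideanSpace ℝ (Fin n)))) =
        (S : Set (EuclideanSpace ℝ (Fin n))) ×ˢ (Set.univ : Set ℝ) := by
      ext p; simp
    rw [hpre, Measure.volume_eq_prod, Measure.prod_prod,
      Measure.addHaar_submodule _ S hS, zero_mul]
  have hsub : Badᶜ ⊆ {ab : Fin Nd → EuclideanSpace ℝ (Fin n) × ℝ |
      ∀ x : EuclideanSpace ℝ (Fin n), ∀ η : EuclideanSpace ℝ (Fin Nd),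
        (∑ j, (η j * deriv σ ((∑ i, (ab j).1 i * x i) + (ab j).2)) • (ab j).1) = 0 →
        η = 0} := by
    intro ab hab x η hsum
    rw [Set.mem_compl_iff, hBadDef, Set.mem_setOf_eq, not_not] at hab
    have hcoef := Fintype.linearIndependent_iff.mp hab
      (fun j => η j * deriv σ ((∑ i, (ab j).1 i * x i) + (ab j).2)) hsum
    refine PiLp.ext fun j => ?_
    have hj := hcoef j
    have hpos := hσ'_pos ((∑ i, (ab j).1 i * x i) + (ab j).2)
    have : η j = 0 := by
      rcases mul_eq_zero.mp hj with h | h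
      · exact h
      · exact absurd h (ne_of_gt hpos)
    exact this
  refine le_antisymm prob_le_one ?_
  calc (1 : ENNReal) = μ Badᶜ := by
        rw [measure_compl hBadMeas (measure_ne_top _ _), hBad0, measure_univ, tsub_zero]
    _ ≤ _ := measure_mono hsub

end
end

section
/- Assume (AL) and (AG); let ψ_j(x) = σ(a_jᵀx + b_j) for j = 1,…,N_d, with σ twice differentiable, σ' > 0 everywhere, and σ, σ', σ'' bounded; let X be any random vector in ℝ^n. Then for every pair of finite signed Borel measures θ, μ on ℝ^p, the function λ ↦ J(θ + λμ) is differentiable on ℝ and its derivative at λ = 0 equals −E_Z[Σ_{j=1}^{N_d} r_j(θ) ∇ψ_j(g_θ(Z))ᵀ g_μ(Z)]. -/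
open MeasureTheory Filter
open scoped RealInnerProductSpace

noncomputable section

/-- Gradient ∇ψ_j(x) = σ'(a_jᵀx + b_j) a_j. -/
noncomputable def gradPsi (n Nd : ℕ) (σ : ℝ → ℝ) (a : Fin Nd → EuclideanSpace ℝ (Fin n))
    (b : Fin Nd → ℝ) (j : Fin Nd) (x : EuclideanSpace ℝ (Fin n)) :
    EuclideanSpace ℝ (Fin n) :=
  deriv σ ((∑ i, a j i * x i) + b j) • a j

section Helpers

variable {α : Type*} [MeasurableSpace α] {E : Type*} [NormedAddCommGroup E] [NormedSpace ℝ E]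

lemma integrable_of_bdd {ν : Measure α} [IsFiniteMeasure ν] {f : α → E}
    (hm : AEStronglyMeasurable f ν) {C : ℝ} (h : ∀ x, ‖f x‖ ≤ C) : Integrable f ν :=
  (integrable_const C).mono' hm (Filter.Eventually.of_forall h)

lemma integral_sub_eq_integral_sub {ν1 ν2 ν3 ν4 : Measure α} {f : α → E}
    (h : ν1 + ν4 = ν3 + ν2)
    (h1 : Integrable f ν1) (h2 : Integrable f ν2) (h3 : Integrable f ν3)
    (h4 : Integrable f ν4) :
    (∫ x, f x ∂ν1) - ∫ x, f x ∂ν2 = (∫ x, f x ∂ν3) - ∫ x, f x ∂ν4 := by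
  have H : (∫ x, f x ∂ν1) + ∫ x, f x ∂ν4 = (∫ x, f x ∂ν3) + ∫ x, f x ∂ν2 := by
    rw [← integral_add_measure h1 h4, ← integral_add_measure h3 h2, h]
  exact sub_eq_sub_iff_add_eq_add.mpr H

lemma signedMeasure_apply_eq (u : MeasureTheory.SignedMeasure α) {i : Set α}
    (hi : MeasurableSet i) :
    u i = (u.toJordanDecomposition.posPart i).toReal
      - (u.toJordanDecomposition.negPart i).toReal := by
  conv_lhs => rw [← u.toSignedMeasure_toJordanDecomposition]
  exact Measure.toSignedMeasure_sub_apply hi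

lemma sInt_add (s t : MeasureTheory.SignedMeasure α) {f : α → E}
    (hm : StronglyMeasurable f) {C : ℝ} (hC : ∀ x, ‖f x‖ ≤ C) :
    sInt (s + t) f = sInt s f + sInt t f := by
  set A := (s + t).toJordanDecomposition.posPart with hA
  set B := (s + t).toJordanDecomposition.negPart with hB
  set Ps := s.toJordanDecomposition.posPart with hPs
  set Ns := s.toJordanDecomposition.negPart with hNs
  set Pt := t.toJordanDecomposition.posPart with hPt
  set Nt := t.toJordanDecomposition.negPart with hNt
  have hmeq : A + (Ns + Nt) = (Ps + Pt) + B := by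
    ext i hi
    have e1 := signedMeasure_apply_eq (s + t) hi
    have e2 := signedMeasure_apply_eq s hi
    have e3 := signedMeasure_apply_eq t hi
    have e4 : (s + t) i = s i + t i := MeasureTheory.VectorMeasure.add_apply s t i
    rw [e2, e3] at e4
    rw [e4] at e1
    simp only [← hA, ← hB, ← hPs, ← hNs, ← hPt, ← hNt] at e1
    simp only [Measure.add_apply]
    have fA := measure_ne_top A i
    have fB := measure_ne_top B i
    have fPs := measure_ne_top Ps i
    have fNs := measure_ne_top Ns i
    have fPt := measure_ne_top Pt i
    have fNt := measure_ne_top Nt i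
    apply (ENNReal.toReal_eq_toReal_iff' (by finiteness) (by finiteness)).mp
    rw [ENNReal.toReal_add fA (by finiteness), ENNReal.toReal_add fNs fNt,
      ENNReal.toReal_add (by finiteness) fB, ENNReal.toReal_add fPs fPt]
    linarith
  have hInt : ∀ ν : Measure α, IsFiniteMeasure ν → Integrable f ν := fun ν hν =>
    @integrable_of_bdd _ _ _ _ _ ν hν f hm.aestronglyMeasurable C hC
  have h1 : Integrable f A := hInt A inferInstance
  have h2 : Integrable f B := hInt B inferInstance
  have h3 : Integrable f Ps := hInt Ps inferInstance
  have h4 : Integrable f Ns := hInt Ns inferInstance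
  have h5 : Integrable f Pt := hInt Pt inferInstance
  have h6 : Integrable f Nt := hInt Nt inferInstance
  have key := integral_sub_eq_integral_sub hmeq h1 h2 (h3.add_measure h5) (h4.add_measure h6)
  show (∫ x, f x ∂A) - ∫ x, f x ∂B = _
  rw [key, integral_add_measure h3 h5, integral_add_measure h4 h6]
  show _ = ((∫ x, f x ∂Ps) - ∫ x, f x ∂Ns) + ((∫ x, f x ∂Pt) - ∫ x, f x ∂Nt)
  abel

lemma sInt_smul (c : ℝ) (t : MeasureTheory.SignedMeasure α) {f : α → E}
    (hm : StronglyMeasurable f) {C : ℝ} (hC : ∀ x, ‖f x‖ ≤ C) :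
    sInt (c • t) f = c • sInt t f := by
  rcases le_or_gt 0 c with hc | hc
  · have hp : (c • t).toJordanDecomposition.posPart
        = c.toNNReal • t.toJordanDecomposition.posPart := by
      rw [MeasureTheory.SignedMeasure.toJordanDecomposition_smul_real,
        MeasureTheory.JordanDecomposition.real_smul_posPart_nonneg _ _ hc]
    have hn : (c • t).toJordanDecomposition.negPart
        = c.toNNReal • t.toJordanDecomposition.negPart := by
      rw [MeasureTheory.SignedMeasure.toJordanDecomposition_smul_real,
        MeasureTheory.JordanDecomposition.real_smul_negPart_nonneg _ _ hc]
    show (∫ x, f x ∂(c • t).toJordanDecomposition.posPart)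
        - ∫ x, f x ∂(c • t).toJordanDecomposition.negPart = _
    rw [hp, hn, integral_smul_nnreal_measure, integral_smul_nnreal_measure]
    show c.toNNReal • _ - c.toNNReal • _ = _
    rw [NNReal.smul_def, NNReal.smul_def, Real.coe_toNNReal c hc, ← smul_sub]
    rfl
  · have hp : (c • t).toJordanDecomposition.posPart
        = (-c).toNNReal • t.toJordanDecomposition.negPart := by
      rw [MeasureTheory.SignedMeasure.toJordanDecomposition_smul_real,
        MeasureTheory.JordanDecomposition.real_smul_posPart_neg _ _ hc]
    have hn : (c • t).toJordanDecomposition.negPart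
        = (-c).toNNReal • t.toJordanDecomposition.posPart := by
      rw [MeasureTheory.SignedMeasure.toJordanDecomposition_smul_real,
        MeasureTheory.JordanDecomposition.real_smul_negPart_neg _ _ hc]
    show (∫ x, f x ∂(c • t).toJordanDecomposition.posPart)
        - ∫ x, f x ∂(c • t).toJordanDecomposition.negPart = _
    rw [hp, hn, integral_smul_nnreal_measure, integral_smul_nnreal_measure]
    show (-c).toNNReal • _ - (-c).toNNReal • _ = _
    rw [NNReal.smul_def, NNReal.smul_def, Real.coe_toNNReal (-c) (by linarith)]
    show _ = c • ((∫ x, f x ∂t.toJordanDecomposition.posPart)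
        - ∫ x, f x ∂t.toJordanDecomposition.negPart)
    rw [neg_smul, neg_smul, smul_sub]
    abel

lemma euclid_continuous {X : Type*} [TopologicalSpace X] {ι : Type*} [Fintype ι]
    {f : X → EuclideanSpace ℝ ι} (h : ∀ i, Continuous fun x => f x i) : Continuous f :=
  (EuclideanSpace.equiv ι ℝ).symm.continuous.comp (continuous_pi h)

lemma euclid_hasDerivAt {ι : Type*} [Fintype ι] {f : ℝ → EuclideanSpace ℝ ι}
    {f' : EuclideanSpace ℝ ι} {x : ℝ} (h : ∀ i, HasDerivAt (fun t => f t i) (f' i) x) :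
    HasDerivAt f f' x := by
  have h2 : HasDerivAt (fun t => (fun i => f t i : ι → ℝ)) (fun i => f' i) x :=
    hasDerivAt_pi.2 h
  exact (((EuclideanSpace.equiv ι ℝ).symm :
    (ι → ℝ) →L[ℝ] EuclideanSpace ℝ ι).hasFDerivAt).comp_hasDerivAt x h2

lemma euclid_norm_le {ι : Type*} [Fintype ι] {x : EuclideanSpace ℝ ι} {C : ℝ} (hC : 0 ≤ C)
    (h : ∀ i, |x i| ≤ C) : ‖x‖ ≤ Real.sqrt (Fintype.card ι) * C := by
  rw [EuclideanSpace.norm_eq]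
  have h1 : ∑ i, ‖x i‖ ^ 2 ≤ (Fintype.card ι : ℝ) * C ^ 2 := by
    calc ∑ i, ‖x i‖ ^ 2 ≤ ∑ _i : ι, C ^ 2 := by
          refine Finset.sum_le_sum fun i _ => ?_
          have := h i
          rw [Real.norm_eq_abs]
          nlinarith [abs_nonneg (x i)]
      _ = (Fintype.card ι : ℝ) * C ^ 2 := by
          rw [Finset.sum_const, Finset.card_univ, nsmul_eq_mul]
  calc Real.sqrt (∑ i, ‖x i‖ ^ 2) ≤ Real.sqrt ((Fintype.card ι : ℝ) * C ^ 2) :=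
        Real.sqrt_le_sqrt h1
    _ = Real.sqrt (Fintype.card ι) * C := by
        rw [Real.sqrt_mul (Nat.cast_nonneg _), Real.sqrt_sq hC]

lemma euclid_inner {ι : Type*} [Fintype ι] (x y : EuclideanSpace ℝ ι) :
    ⟪x, y⟫ = ∑ i, x i * y i := by
  simp [PiLp.inner_apply, RCLike.inner_apply, conj_trivial]
  exact Finset.sum_congr rfl fun i _ => mul_comm _ _

end Helpers

/-- Auxiliary: the z-integrand of the residual along the segment θ + λμ. -/
noncomputable def Fq (n k Nd : ℕ) (σg σ : ℝ → ℝ) (a : Fin Nd → EuclideanSpace ℝ (Fin n))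
    (b : Fin Nd → ℝ) (qZ : EuclideanSpace ℝ (Fin k) → ℝ)
    (θ μ : MeasureTheory.SignedMeasure (Par n k)) (lam : ℝ)
    (z : EuclideanSpace ℝ (Fin k)) : EuclideanSpace ℝ (Fin Nd) :=
  qZ z • Psi n Nd σ a b (gen n k σg θ z + lam • gen n k σg μ z)

/-- Auxiliary: its λ-derivative. -/
noncomputable def Fq' (n k Nd : ℕ) (σg σ : ℝ → ℝ) (a : Fin Nd → EuclideanSpace ℝ (Fin n))
    (b : Fin Nd → ℝ) (qZ : EuclideanSpace ℝ (Fin k) → ℝ)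
    (θ μ : MeasureTheory.SignedMeasure (Par n k)) (lam : ℝ)
    (z : EuclideanSpace ℝ (Fin k)) : EuclideanSpace ℝ (Fin Nd) :=
  qZ z • (WithLp.toLp 2 (fun j => deriv σ ((∑ i, a j i * (gen n k σg θ z + lam • gen n k σg μ z) i) + b j)
      * ∑ i, a j i * gen n k σg μ z i) : EuclideanSpace ℝ (Fin Nd))

/-- for any finite signed measures θ, μ, the map λ ↦ J(θ + λμ) is
differentiable on ℝ, and its derivative at λ = 0 equals
−E_Z[∑_j r_j(θ) ∇ψ_j(g_θ(Z))ᵀ g_μ(Z)]. -/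
theorem wgan_loss_directional_derivative
    (n k Nd : ℕ)
    -- (AL): latent density
    (qZ : EuclideanSpace ℝ (Fin k) → ℝ)
    (hq_lip : ∃ L : NNReal, LipschitzWith L qZ)
    (hq_pos : ∀ z, 0 < qZ z)
    (hq_prob : ∫ z, qZ z = 1)
    -- (AG): generator activation
    (σg : ℝ → ℝ) (hσg_cont : Continuous σg)
    (hσg_bdd : ∃ M, ∀ r, |σg r| ≤ M)
    (hσg_lim : ∃ l u : ℝ, Tendsto σg atBot (nhds l) ∧ Tendsto σg atTop (nhds u) ∧ l < u)
    -- discriminator activation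
    (σ : ℝ → ℝ) (hσ_diff : Differentiable ℝ σ) (hσ'_diff : Differentiable ℝ (deriv σ))
    (hσ'_pos : ∀ t, 0 < deriv σ t)
    (hσ_bdd : ∃ M, ∀ t, |σ t| + |deriv σ t| + |deriv (deriv σ) t| ≤ M)
    (a : Fin Nd → EuclideanSpace ℝ (Fin n)) (b : Fin Nd → ℝ)
    -- true data distribution: any random vector X in ℝ^n
    (PX : Measure (EuclideanSpace ℝ (Fin n))) (hPX : IsProbabilityMeasure PX)
    (θ μ : MeasureTheory.SignedMeasure (Par n k)) :
    (∀ t : ℝ,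
      DifferentiableAt ℝ (fun lam : ℝ => Jloss n k Nd σg σ a b PX qZ (θ + lam • μ)) t) ∧
    HasDerivAt (fun lam : ℝ => Jloss n k Nd σg σ a b PX qZ (θ + lam • μ))
      (-(∫ z, qZ z * ∑ j, resid n k Nd σg σ a b PX qZ θ j *
          ⟪gradPsi n Nd σ a b j (gen n k σg θ z), gen n k σg μ z⟫)) 0 := by
  classical
  obtain ⟨Mg, hMg⟩ := hσg_bdd
  have hMg0 : 0 ≤ Mg := le_trans (abs_nonneg _) (hMg 0)
  obtain ⟨Mσ, hMσ⟩ := hσ_bdd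
  have hσle : ∀ t, |σ t| ≤ Mσ := fun t => by
    have h := hMσ t
    have h1 := abs_nonneg (deriv σ t)
    have h2 := abs_nonneg (deriv (deriv σ) t)
    linarith
  have hσ'le : ∀ t, |deriv σ t| ≤ Mσ := fun t => by
    have h := hMσ t
    have h1 := abs_nonneg (σ t)
    have h2 := abs_nonneg (deriv (deriv σ) t)
    linarith
  have hMσ0 : 0 ≤ Mσ := le_trans (abs_nonneg _) (hσle 0)
  obtain ⟨L, hL⟩ := hq_lip
  have hqcont : Continuous qZ := hL.continuous
  have hqZ_int : Integrable qZ := by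
    by_contra h
    rw [integral_undef h] at hq_prob
    exact one_ne_zero hq_prob.symm
  -- facts about phi
  have hphibdd : ∀ (z : EuclideanSpace ℝ (Fin k)) (κ : Par n k),
      ‖phi n k σg κ z‖ ≤ Real.sqrt n * Mg := by
    intro z κ
    have := euclid_norm_le (x := phi n k σg κ z) hMg0 (fun i => hMg ((∑ j, κ.1 i j * z j) + κ.2 i))
    simpa using this
  have hphicontκ : ∀ z : EuclideanSpace ℝ (Fin k),
      Continuous fun κ : Par n k => phi n k σg κ z := by
    intro z
    apply euclid_continuous
    intro i
    show Continuous fun κ : Par n k => σg ((∑ j, κ.1 i j * z j) + κ.2 i)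
    exact hσg_cont.comp ((continuous_finset_sum _ fun j _ =>
      (((continuous_apply j).comp ((continuous_apply i).comp continuous_fst)).mul
        continuous_const)).add ((continuous_apply i).comp continuous_snd))
  have hphism : ∀ z, StronglyMeasurable fun κ : Par n k => phi n k σg κ z :=
    fun z => (hphicontκ z).stronglyMeasurable
  have hphicontz : ∀ κ : Par n k,
      Continuous fun z : EuclideanSpace ℝ (Fin k) => phi n k σg κ z := by
    intro κ
    apply euclid_continuous
    intro i
    show Continuous fun z : EuclideanSpace ℝ (Fin k) => σg ((∑ j, κ.1 i j * z j) + κ.2 i)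
    exact hσg_cont.comp ((continuous_finset_sum _ fun j _ =>
      continuous_const.mul (EuclideanSpace.proj j).continuous).add continuous_const)
  -- facts about gen
  have hgenlin : ∀ (lam : ℝ) (z : EuclideanSpace ℝ (Fin k)),
      gen n k σg (θ + lam • μ) z = gen n k σg θ z + lam • gen n k σg μ z := by
    intro lam z
    show sInt (θ + lam • μ) _ = _
    rw [sInt_add θ (lam • μ) (hphism z) (hphibdd z),
      sInt_smul lam μ (hphism z) (hphibdd z)]
    rfl
  have hgenbound : ∀ (ν : MeasureTheory.SignedMeasure (Par n k))
      (z : EuclideanSpace ℝ (Fin k)),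
      ‖gen n k σg ν z‖ ≤ Real.sqrt n * Mg *
        ((ν.toJordanDecomposition.posPart Set.univ).toReal
          + (ν.toJordanDecomposition.negPart Set.univ).toReal) := by
    intro ν z
    refine (norm_sub_le _ _).trans ?_
    rw [mul_add]
    exact add_le_add
      (norm_integral_le_of_norm_le_const (Filter.Eventually.of_forall fun κ => hphibdd z κ))
      (norm_integral_le_of_norm_le_const (Filter.Eventually.of_forall fun κ => hphibdd z κ))
  have hgencont : ∀ ν : MeasureTheory.SignedMeasure (Par n k),
      Continuous fun z => gen n k σg ν z := by
    intro ν
    have h1 : ∀ m : Measure (Par n k), IsFiniteMeasure m →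
        Continuous fun z : EuclideanSpace ℝ (Fin k) => ∫ κ, phi n k σg κ z ∂m := by
      intro m hm
      haveI := hm
      exact continuous_of_dominated (fun z => (hphism z).aestronglyMeasurable)
        (fun z => Filter.Eventually.of_forall fun κ => hphibdd z κ)
        (integrable_const _) (Filter.Eventually.of_forall fun κ => hphicontz κ)
    exact (h1 _ inferInstance).sub (h1 _ inferInstance)
  -- constants
  set Cμ : ℝ := Real.sqrt n * Mg * ((μ.toJordanDecomposition.posPart Set.univ).toReal
    + (μ.toJordanDecomposition.negPart Set.univ).toReal) with hCμdef
  have hCμ0 : 0 ≤ Cμ := le_trans (norm_nonneg _) (hgenbound μ 0)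
  set A : ℝ := ∑ j, ‖a j‖ with hAdef
  have haA : ∀ j, ‖a j‖ ≤ A := fun j =>
    Finset.single_le_sum (fun i _ => norm_nonneg (a i)) (Finset.mem_univ j)
  have hA0 : 0 ≤ A := Finset.sum_nonneg fun i _ => norm_nonneg _
  -- pointwise derivative in λ
  have hFderiv : ∀ (z : EuclideanSpace ℝ (Fin k)) (lam : ℝ),
      HasDerivAt (fun l => Fq n k Nd σg σ a b qZ θ μ l z)
        (Fq' n k Nd σg σ a b qZ θ μ lam z) lam := by
    intro z lam
    apply euclid_hasDerivAt
    intro j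
    have hsum : ∀ l : ℝ,
        (∑ i, a j i * (gen n k σg θ z + l • gen n k σg μ z) i)
        = (∑ i, a j i * gen n k σg θ z i) + l * ∑ i, a j i * gen n k σg μ z i := by
      intro l
      simp only [PiLp.add_apply, PiLp.smul_apply, smul_eq_mul, mul_add]
      rw [Finset.sum_add_distrib, Finset.mul_sum]
      congr 1
      exact Finset.sum_congr rfl fun i _ => by ring
    show HasDerivAt
      (fun l => qZ z * σ ((∑ i, a j i * (gen n k σg θ z + l • gen n k σg μ z) i) + b j))
      (qZ z * (deriv σ ((∑ i, a j i * (gen n k σg θ z + lam • gen n k σg μ z) i) + b j)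
        * ∑ i, a j i * gen n k σg μ z i)) lam
    simp only [hsum]
    set c := ∑ i, a j i * gen n k σg θ z i with hc
    set d := ∑ i, a j i * gen n k σg μ z i with hd
    have hinner : HasDerivAt (fun l : ℝ => c + l * d + b j) d lam := by
      simpa using (((hasDerivAt_id lam).mul_const d).const_add c).add_const (b j)
    have hσd : HasDerivAt σ (deriv σ (c + lam * d + b j)) (c + lam * d + b j) :=
      (hσ_diff _).hasDerivAt
    exact (hσd.comp lam hinner).const_mul (qZ z)
  -- measurability and integrability
  have hPsicont : Continuous (Psi n Nd σ a b) := by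
    apply euclid_continuous
    intro j
    show Continuous fun x : EuclideanSpace ℝ (Fin n) => σ ((∑ i, a j i * x i) + b j)
    exact hσ_diff.continuous.comp ((continuous_finset_sum _ fun i _ =>
      continuous_const.mul (EuclideanSpace.proj i).continuous).add continuous_const)
  have hFm : ∀ x : ℝ, AEStronglyMeasurable (Fq n k Nd σg σ a b qZ θ μ x) volume := by
    intro x
    apply Continuous.aestronglyMeasurable
    exact hqcont.smul (hPsicont.comp ((hgencont θ).add ((hgencont μ).const_smul x)))
  have hPsibdd : ∀ x, ‖Psi n Nd σ a b x‖ ≤ Real.sqrt Nd * Mσ := by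
    intro x
    have := euclid_norm_le (x := Psi n Nd σ a b x) hMσ0 (fun j => hσle ((∑ i, a j i * x i) + b j))
    simpa using this
  have hFint : ∀ x : ℝ, Integrable (Fq n k Nd σg σ a b qZ θ μ x) := by
    intro x
    refine (hqZ_int.mul_const (Real.sqrt Nd * Mσ)).mono' (hFm x)
      (Filter.Eventually.of_forall fun z => ?_)
    show ‖qZ z • Psi n Nd σ a b _‖ ≤ _
    rw [norm_smul, Real.norm_eq_abs, abs_of_pos (hq_pos z)]
    exact mul_le_mul_of_nonneg_left (hPsibdd _) (hq_pos z).le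
  have hF'm : ∀ x : ℝ, AEStronglyMeasurable (Fq' n k Nd σg σ a b qZ θ μ x) volume := by
    intro x
    apply Continuous.aestronglyMeasurable
    apply hqcont.smul
    apply euclid_continuous
    intro j
    refine Continuous.mul ?_ ?_
    · exact hσ'_diff.continuous.comp ((continuous_finset_sum _ fun i _ =>
        continuous_const.mul ((EuclideanSpace.proj i).continuous.comp
          ((hgencont θ).add ((hgencont μ).const_smul x)))).add continuous_const)
    · exact continuous_finset_sum _ fun i _ =>
        continuous_const.mul ((EuclideanSpace.proj i).continuous.comp (hgencont μ))
  have hK0 : 0 ≤ Mσ * (A * Cμ) := mul_nonneg hMσ0 (mul_nonneg hA0 hCμ0)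
  have hF'bound : ∀ (x : ℝ) (z : EuclideanSpace ℝ (Fin k)),
      ‖Fq' n k Nd σg σ a b qZ θ μ x z‖
      ≤ qZ z * (Real.sqrt Nd * (Mσ * (A * Cμ))) := by
    intro x z
    have hDb : ∀ j, |deriv σ ((∑ i, a j i * (gen n k σg θ z + x • gen n k σg μ z) i) + b j)
        * ∑ i, a j i * gen n k σg μ z i| ≤ Mσ * (A * Cμ) := by
      intro j
      rw [abs_mul]
      have h1 := hσ'le ((∑ i, a j i * (gen n k σg θ z + x • gen n k σg μ z) i) + b j)
      have h2 : |∑ i, a j i * gen n k σg μ z i| ≤ A * Cμ := by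
        have he : (∑ i, a j i * gen n k σg μ z i) = ⟪a j, gen n k σg μ z⟫ :=
          (euclid_inner _ _).symm
        rw [he]
        exact (abs_real_inner_le_norm _ _).trans
          (mul_le_mul (haA j) (hgenbound μ z) (norm_nonneg _) hA0)
      exact mul_le_mul h1 h2 (abs_nonneg _) hMσ0
    unfold Fq'
    rw [norm_smul, Real.norm_eq_abs, abs_of_pos (hq_pos z)]
    refine mul_le_mul_of_nonneg_left ?_ (hq_pos z).le
    refine le_trans (euclid_norm_le hK0 fun j => hDb j) ?_
    exact le_of_eq (by rw [Fintype.card_fin])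
  -- differentiation under the integral sign
  have key : ∀ x₀ : ℝ, Integrable (Fq' n k Nd σg σ a b qZ θ μ x₀) volume ∧
      HasDerivAt (fun l => ∫ z, Fq n k Nd σg σ a b qZ θ μ l z)
        (∫ z, Fq' n k Nd σg σ a b qZ θ μ x₀ z) x₀ := by
    intro x₀
    exact hasDerivAt_integral_of_dominated_loc_of_deriv_le (Metric.ball_mem_nhds x₀ one_pos)
      (Filter.Eventually.of_forall fun x => hFm x) (hFint x₀) (hF'm x₀)
      (Filter.Eventually.of_forall fun z x _ => hF'bound x z)
      (hqZ_int.mul_const _)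
      (Filter.Eventually.of_forall fun z x _ => hFderiv z x)
  -- rewrite the loss along the segment
  have hfun : (fun lam : ℝ => Jloss n k Nd σg σ a b PX qZ (θ + lam • μ))
      = fun lam : ℝ => (1 / 2 : ℝ) *
        ⟪(∫ x, Psi n Nd σ a b x ∂PX) - ∫ z, Fq n k Nd σg σ a b qZ θ μ lam z,
         (∫ x, Psi n Nd σ a b x ∂PX) - ∫ z, Fq n k Nd σg σ a b qZ θ μ lam z⟫ := by
    funext lam
    have hint : (fun z => qZ z • Psi n Nd σ a b (gen n k σg (θ + lam • μ) z))
        = fun z => Fq n k Nd σg σ a b qZ θ μ lam z := by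
      funext z
      rw [show gen n k σg (θ + lam • μ) z
        = gen n k σg θ z + lam • gen n k σg μ z from hgenlin lam z]
      rfl
    show (1 / 2 : ℝ) * ‖(∫ x, Psi n Nd σ a b x ∂PX)
        - ∫ z, qZ z • Psi n Nd σ a b (gen n k σg (θ + lam • μ) z)‖ ^ 2 = _
    rw [hint, ← real_inner_self_eq_norm_sq]
  -- derivative of the loss at every point
  have hJd : ∀ t : ℝ, HasDerivAt (fun lam : ℝ => (1 / 2 : ℝ) *
      ⟪(∫ x, Psi n Nd σ a b x ∂PX) - ∫ z, Fq n k Nd σg σ a b qZ θ μ lam z,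
       (∫ x, Psi n Nd σ a b x ∂PX) - ∫ z, Fq n k Nd σg σ a b qZ θ μ lam z⟫)
      (-⟪(∫ x, Psi n Nd σ a b x ∂PX) - ∫ z, Fq n k Nd σg σ a b qZ θ μ t z,
          ∫ z, Fq' n k Nd σg σ a b qZ θ μ t z⟫) t := by
    intro t
    have hR : HasDerivAt
        (fun lam : ℝ => (∫ x, Psi n Nd σ a b x ∂PX) - ∫ z, Fq n k Nd σg σ a b qZ θ μ lam z)
        (-(∫ z, Fq' n k Nd σg σ a b qZ θ μ t z)) t := (key t).2.const_sub _
    have h2 := HasDerivAt.const_mul (1 / 2 : ℝ) (HasDerivAt.inner ℝ hR hR)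
    refine h2.congr_deriv ?_
    rw [inner_neg_right, inner_neg_left, real_inner_comm]
    ring
  rw [hfun]
  constructor
  · intro t
    exact (hJd t).differentiableAt
  · have h0 := hJd 0
    convert h0 using 1
    have hF0 : (fun z => Fq n k Nd σg σ a b qZ θ μ 0 z)
        = fun z => qZ z • Psi n Nd σ a b (gen n k σg θ z) := by
      funext z
      show qZ z • Psi n Nd σ a b (gen n k σg θ z + (0 : ℝ) • gen n k σg μ z) = _
      rw [zero_smul, add_zero]
    have hR0 : (∫ x, Psi n Nd σ a b x ∂PX) - ∫ z, Fq n k Nd σg σ a b qZ θ μ 0 z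
        = resid n k Nd σg σ a b PX qZ θ := by
      show _ = (∫ x, Psi n Nd σ a b x ∂PX)
        - ∫ z, qZ z • Psi n Nd σ a b (gen n k σg θ z)
      rw [hF0]
    rw [hR0, ← integral_inner (key 0).1]
    rw [neg_inj]
    apply integral_congr_ae
    apply Filter.Eventually.of_forall
    intro z
    simp only [Fq', gradPsi, real_inner_smul_right, real_inner_smul_left, euclid_inner,
      zero_smul, add_zero]

end
end
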